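/- Let f̆ : ℕ → ℝ be increasing with f̆(n) ≥ 1 for all n, and let d ≥ 2 be an integer. If ∑_{n=1}^∞ 1/f̆(n) = ∞, then ∑_{m=1}^∞ d^m/(f̆(d^{m+1}) + d^{m+1}) = ∞. -/

import Mathlib

/-- If `f̆ : ℕ → ℝ` is increasing with `f̆ ≥ 1` and `d ≥ 2`, then divergence of
`∑ 1/f̆(n)` implies divergence of `∑_m d^m / (f̆(d^{m+1}) + d^{m+1})`. -/
theorem sum_geom_over_breve_diverges (fb : ℕ → ℝ) (hmono : Monotone fb)
    (hone : ∀ n, 1 ≤ fb n) (d : ℕ) (hd : 2 ≤ d)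
    (hdiv : ¬ Summable (fun n : ℕ => 1 / fb n)) :
    ¬ Summable (fun m : ℕ => (d : ℝ) ^ m / (fb (d ^ (m + 1)) + (d : ℝ) ^ (m + 1))) := by
  intro hS
  apply hdiv
  set a : ℕ → ℝ := fun m => (d : ℝ) ^ m / (fb (d ^ (m + 1)) + (d : ℝ) ^ (m + 1)) with ha
  have hd1 : (1:ℕ) < d := by omega
  have hdR : (2:ℝ) ≤ (d:ℝ) := by exact_mod_cast hd
  have hdpos : (0:ℝ) < d := by linarith
  have hfpos : ∀ n, (0:ℝ) < fb n := fun n => lt_of_lt_of_le one_pos (hone n)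
  have hden : ∀ m : ℕ, (0:ℝ) < fb (d ^ (m + 1)) + (d : ℝ) ^ (m + 1) := by
    intro m
    have := hfpos (d ^ (m+1))
    positivity
  have hanonneg : ∀ m, 0 ≤ a m := by
    intro m
    have := hden m
    have : (0:ℝ) ≤ (d:ℝ) ^ m := by positivity
    exact div_nonneg this (le_of_lt (hden m))
  have h0 : Filter.Tendsto a Filter.atTop (nhds 0) := hS.tendsto_atTop_zero
  have hev : ∀ᶠ m in Filter.atTop, a m < 1/(2*d) :=
    h0.eventually_lt_const (by positivity)
  obtain ⟨M, hM⟩ := Filter.eventually_atTop.mp hev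
  -- key pointwise bound
  have key : ∀ m, M ≤ m → ∀ n, d ^ (m+1) ≤ n → 1 / fb n ≤ 2 * a m / (d:ℝ) ^ m := by
    intro m hm n hn
    set F := fb (d ^ (m+1)) with hF
    set D := (d:ℝ) ^ (m+1) with hD
    have hFpos : 0 < F := hfpos _
    have hDpos : 0 < D := by positivity
    have hlt : a m < 1/(2*d) := hM m hm
    have hDF : D < F := by
      have h1 : (d:ℝ) ^ m * (2*d) < 1 * (F + D) := by
        rw [ha] at hlt
        have := (div_lt_div_iff₀ (hden m) (by positivity : (0:ℝ) < 2*d)).mp hlt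
        simpa using this
      have h2 : 2 * D = (d:ℝ) ^ m * (2*d) := by
        rw [hD, pow_succ]; ring
      nlinarith
    have h1F : 1 / fb n ≤ 1 / F := by
      apply one_div_le_one_div_of_le hFpos
      exact hmono hn
    have h2F : 1 / F ≤ 2 * a m / (d:ℝ) ^ m := by
      have hdm : (0:ℝ) < (d:ℝ) ^ m := by positivity
      have : 2 * a m / (d:ℝ) ^ m = 2 / (F + D) := by
        rw [ha]
        show 2 * ((d:ℝ)^m / (F + D)) / (d:ℝ)^m = 2 / (F + D)
        rw [mul_div_assoc, div_div, mul_comm (F + D), ← div_div, div_self hdm.ne', mul_one_div]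
      rw [this]
      rw [div_le_div_iff₀ hFpos (hden m)]
      have : F + D ≤ 2 * F := by linarith
      linarith
    linarith
  -- block partial sum bound
  have key2 : ∀ K : ℕ, ∑ n ∈ Finset.range (d ^ (M + 1 + K)), 1 / fb n ≤
      (d:ℝ) ^ (M+1) + 2 * (d:ℝ)^2 * ∑ m ∈ Finset.Ico M (M + K), a m := by
    intro K
    induction K with
    | zero =>
      simp only [Nat.add_zero, Finset.Ico_self, Finset.sum_empty, mul_zero, add_zero]
      calc ∑ n ∈ Finset.range (d ^ (M + 1)), 1 / fb n
          ≤ ∑ n ∈ Finset.range (d ^ (M + 1)), 1 := by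
            apply Finset.sum_le_sum
            intro n _
            rw [div_le_one (hfpos n)]
            exact hone n
        _ = (d:ℝ) ^ (M+1) := by
            rw [Finset.sum_const, nsmul_eq_mul, mul_one, Finset.card_range]
            push_cast
            ring
    | succ K ih =>
      have hle : d ^ (M + 1 + K) ≤ d ^ (M + 1 + (K+1)) :=
        Nat.pow_le_pow_right (by omega) (by omega)
      have hsplit : ∑ n ∈ Finset.range (d ^ (M + 1 + (K+1))), 1 / fb n =
          ∑ n ∈ Finset.range (d ^ (M + 1 + K)), 1 / fb n +
          ∑ n ∈ Finset.Ico (d ^ (M + 1 + K)) (d ^ (M + 1 + (K+1))), 1 / fb n := by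
        simp only [Finset.range_eq_Ico]
        exact (Finset.sum_Ico_consecutive _ (Nat.zero_le _) hle).symm
      have hblock : ∑ n ∈ Finset.Ico (d ^ (M + 1 + K)) (d ^ (M + 1 + (K+1))), 1 / fb n ≤
          2 * (d:ℝ)^2 * a (M + K) := by
        have hbound : ∀ n ∈ Finset.Ico (d ^ (M + 1 + K)) (d ^ (M + 1 + (K+1))),
            1 / fb n ≤ 2 * a (M + K) / (d:ℝ) ^ (M + K) := by
          intro n hn
          rw [Finset.mem_Ico] at hn
          exact key (M + K) (by omega) n (by
            have : M + 1 + K = (M + K) + 1 := by omega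
            rw [this] at hn
            exact hn.1)
        calc ∑ n ∈ Finset.Ico (d ^ (M + 1 + K)) (d ^ (M + 1 + (K+1))), 1 / fb n
            ≤ ∑ _n ∈ Finset.Ico (d ^ (M + 1 + K)) (d ^ (M + 1 + (K+1))),
                2 * a (M + K) / (d:ℝ) ^ (M + K) := Finset.sum_le_sum hbound
          _ = ((d ^ (M + 1 + (K+1)) - d ^ (M + 1 + K) : ℕ) : ℝ) *
                (2 * a (M + K) / (d:ℝ) ^ (M + K)) := by
              rw [Finset.sum_const, Nat.card_Ico, nsmul_eq_mul]
          _ ≤ (d:ℝ) ^ (M + K + 2) * (2 * a (M + K) / (d:ℝ) ^ (M + K)) := by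
              apply mul_le_mul_of_nonneg_right
              · have h1 : (d ^ (M + 1 + (K+1)) - d ^ (M + 1 + K) : ℕ) ≤ d ^ (M + K + 2) := by
                  have heq : M + 1 + (K+1) = M + K + 2 := by omega
                  rw [heq]
                  exact Nat.sub_le _ _
                calc ((d ^ (M + 1 + (K+1)) - d ^ (M + 1 + K) : ℕ) : ℝ)
                    ≤ ((d ^ (M + K + 2) : ℕ) : ℝ) := by exact_mod_cast h1
                  _ = (d:ℝ) ^ (M + K + 2) := by push_cast; ring
              · have := hanonneg (M + K)
                positivity
          _ = 2 * (d:ℝ)^2 * a (M + K) := by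
              have hdm : (0:ℝ) < (d:ℝ) ^ (M + K) := by positivity
              rw [pow_add]
              field_simp
      have hico : ∑ m ∈ Finset.Ico M (M + (K+1)), a m =
          ∑ m ∈ Finset.Ico M (M + K), a m + a (M + K) := by
        have : M + (K+1) = (M + K) + 1 := by omega
        rw [this, Finset.sum_Ico_succ_top (by omega)]
      rw [hsplit, hico]
      have : 2 * (d:ℝ)^2 * (∑ m ∈ Finset.Ico M (M + K), a m + a (M + K)) =
          2 * (d:ℝ)^2 * ∑ m ∈ Finset.Ico M (M + K), a m + 2 * (d:ℝ)^2 * a (M + K) := by ring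
      linarith
  -- conclude summability
  have hbnonneg : ∀ n, (0:ℝ) ≤ 1 / fb n := fun n => by
    have := hfpos n; positivity
  apply summable_of_sum_range_le hbnonneg
    (c := (d:ℝ) ^ (M+1) + 2 * (d:ℝ)^2 * ∑' m, a m)
  intro N
  have hsub : Finset.range N ⊆ Finset.range (d ^ (M + 1 + N)) := by
    apply Finset.range_subset_range.mpr
    calc N ≤ d ^ N := le_of_lt (Nat.lt_pow_self (n := N) hd1)
      _ ≤ d ^ (M + 1 + N) := Nat.pow_le_pow_right (by omega) (by omega)
  have h1 : ∑ n ∈ Finset.range N, 1 / fb n ≤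
      ∑ n ∈ Finset.range (d ^ (M + 1 + N)), 1 / fb n :=
    Finset.sum_le_sum_of_subset_of_nonneg hsub (fun n _ _ => hbnonneg n)
  have h2 := key2 N
  have h3 : ∑ m ∈ Finset.Ico M (M + N), a m ≤ ∑' m, a m :=
    Summable.sum_le_tsum _ (fun m _ => hanonneg m) hS
  have h4 : 2 * (d:ℝ)^2 * ∑ m ∈ Finset.Ico M (M + N), a m ≤
      2 * (d:ℝ)^2 * ∑' m, a m := by
    apply mul_le_mul_of_nonneg_left h3
    positivity
  linarith
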